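/- For every integer i≥0, every integer j, and every n∈ℕ, the identities f_{i+1,F(i+1)+j}(n) = f_{i,j}(a(n)) and f_{i+2,j}(n) = f_{i,j}(b(n)) hold; consequently, R_{i,j} is the disjoint union of R_{i+1,F(i+1)+j} and R_{i+2,j}, i.e. R_{i,j} = R_{i+1,F(i+1)+j} ∪ R_{i+2,j} and R_{i+1,F(i+1)+j} ∩ R_{i+2,j} = ∅. -/

import Mathlib

/-- The golden ratio φ = (1 + √5)/2. -/
noncomputable def phi : ℝ := (1 + Real.sqrt 5) / 2

/-- The lower Wythoff sequence a(n) = ⌊nφ⌋. -/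
noncomputable def wa (n : ℕ) : ℕ := ⌊(n : ℝ) * phi⌋₊

/-- The upper Wythoff sequence b(n) = ⌊nφ²⌋. -/
noncomputable def wb (n : ℕ) : ℕ := ⌊(n : ℝ) * phi ^ 2⌋₊

/-- f_{i,j}(n) = F(i+1)·a(n) + F(i)·n − j. -/
noncomputable def fij (i : ℕ) (j : ℤ) (n : ℕ) : ℤ :=
  (Nat.fib (i + 1) : ℤ) * wa n + (Nat.fib i : ℤ) * n - j

/-- R_{i,j} = { f_{i,j}(n) : n ∈ ℕ, n ≥ 1 }. -/
def R (i : ℕ) (j : ℤ) : Set ℤ := {m | ∃ n : ℕ, 0 < n ∧ fij i j n = m}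

open scoped symmDiff

lemma phi_eq_gold : phi = Real.goldenRatio := rfl

lemma phi_pos : 0 < phi := phi_eq_gold ▸ Real.goldenRatio_pos

lemma phi_nn : 0 ≤ phi := phi_pos.le

lemma one_lt_phi : 1 < phi := phi_eq_gold ▸ Real.one_lt_goldenRatio

lemma phi_lt_two : phi < 2 := by
  have h5 : Real.sqrt 5 < 3 := by
    nlinarith [Real.sq_sqrt (by norm_num : (5:ℝ) ≥ 0), Real.sqrt_nonneg 5]
  rw [phi]; linarith

lemma phi_sq : phi ^ 2 = phi + 1 := phi_eq_gold ▸ Real.goldenRatio_sq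

lemma phi_irr : Irrational phi := phi_eq_gold ▸ Real.goldenRatio_irrational

lemma wa_bounds {n : ℕ} (hn : 0 < n) :
    (wa n : ℝ) < (n : ℝ) * phi ∧ (n : ℝ) * phi < (wa n : ℝ) + 1 := by
  have hirr : Irrational ((n : ℝ) * phi) := by
    have := phi_irr.natCast_mul (m := n) hn.ne'
    simpa using this
  have hpos : 0 ≤ (n : ℝ) * phi := mul_nonneg (Nat.cast_nonneg n) phi_nn
  refine ⟨lt_of_le_of_ne (Nat.floor_le hpos) fun h => hirr.ne_nat (wa n) h.symm, ?_⟩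
  exact Nat.lt_floor_add_one _

lemma wa_pos {n : ℕ} (hn : 0 < n) : 0 < wa n := by
  rw [wa, Nat.floor_pos]
  have : (1 : ℝ) ≤ (n : ℝ) := by exact_mod_cast hn
  nlinarith [one_lt_phi]

lemma wb_eq (n : ℕ) : wb n = wa n + n := by
  rw [wb, wa, show (n : ℝ) * phi ^ 2 = (n : ℝ) * phi + n by rw [phi_sq]; ring]
  exact Nat.floor_add_natCast (mul_nonneg (Nat.cast_nonneg n) phi_nn) n

lemma wb_pos {n : ℕ} (hn : 0 < n) : 0 < wb n := by
  rw [wb_eq]; omega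

lemma waa {n : ℕ} (hn : 0 < n) : (wa (wa n) : ℤ) = (wa n : ℤ) + n - 1 := by
  obtain ⟨h1, h2⟩ := wa_bounds hn
  have hwp := wa_pos hn
  have key : wa (wa n) = wa n + n - 1 := by
    rw [wa, Nat.floor_eq_iff (mul_nonneg (Nat.cast_nonneg _) phi_nn)]
    have hc : ((wa n + n - 1 : ℕ) : ℝ) = (wa n : ℝ) + n - 1 := by
      have : 1 ≤ wa n + n := by omega
      push_cast [Nat.cast_sub this]
      ring
    rw [hc]
    constructor <;> nlinarith [phi_sq, one_lt_phi, phi_lt_two]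
  rw [key]
  have : 1 ≤ wa n + n := by omega
  push_cast [Nat.cast_sub this]
  ring

lemma wab {n : ℕ} (hn : 0 < n) : (wa (wb n) : ℤ) = 2 * (wa n : ℤ) + n := by
  obtain ⟨h1, h2⟩ := wa_bounds hn
  have key : wa (wb n) = 2 * wa n + n := by
    rw [wa, wb_eq, Nat.floor_eq_iff (mul_nonneg (Nat.cast_nonneg _) phi_nn)]
    push_cast
    constructor <;> nlinarith [phi_sq, one_lt_phi, phi_lt_two]
  rw [key]; push_cast; ring

lemma wa_strictMono : StrictMono wa := by
  intro n m hnm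
  have h1 : (n : ℝ) * phi < (wa n : ℝ) + 1 := Nat.lt_floor_add_one _
  have hm : ((n : ℝ) + 1) * phi ≤ (m : ℝ) * phi := by
    have : (n : ℝ) + 1 ≤ (m : ℝ) := by exact_mod_cast hnm
    nlinarith [one_lt_phi]
  have hle : (wa n : ℝ) ≤ (n : ℝ) * phi :=
    Nat.floor_le (mul_nonneg (Nat.cast_nonneg n) phi_nn)
  have hkey : ((wa n + 1 : ℕ) : ℝ) ≤ (m : ℝ) * phi := by
    push_cast
    nlinarith [one_lt_phi]
  have : wa n + 1 ≤ wa m := Nat.le_floor hkey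
  omega

lemma hconj : Real.HolderConjugate phi (phi ^ 2) := by
  constructor
  · have h0 : phi ≠ 0 := by nlinarith [one_lt_phi]
    rw [inv_one]
    field_simp
    nlinarith [phi_sq]
  · exact phi_pos
  · exact pow_pos phi_pos 2

lemma hsymmdiff :
    {x | ∃ k > 0, beattySeq phi k = x} ∆ {x | ∃ k > 0, beattySeq (phi ^ 2) k = x}
      = {n : ℤ | 0 < n} :=
  Irrational.beattySeq_symmDiff_beattySeq_pos hconj phi_irr

lemma wa_eq_beatty (k : ℕ) : (wa k : ℤ) = beattySeq phi (k : ℤ) := by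
  rw [wa, beattySeq, Int.natCast_floor_eq_floor (mul_nonneg (Nat.cast_nonneg _) phi_nn)]
  norm_num

lemma wb_eq_beatty (k : ℕ) : (wb k : ℤ) = beattySeq (phi ^ 2) (k : ℤ) := by
  rw [wb, beattySeq, Int.natCast_floor_eq_floor (mul_nonneg (Nat.cast_nonneg _) (by nlinarith [phi_pos] : (0:ℝ) ≤ phi ^ 2))]
  norm_num

lemma wythoff_disjoint {k l : ℕ} (hk : 0 < k) (hl : 0 < l) : wa k ≠ wb l := by
  intro h
  have hmem : ((wa k : ℤ)) ∈
      {x | ∃ m > 0, beattySeq phi m = x} ∆ {x | ∃ m > 0, beattySeq (phi ^ 2) m = x} := by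
    rw [hsymmdiff]
    simp only [Set.mem_setOf_eq]
    exact_mod_cast wa_pos hk
  rw [Set.mem_symmDiff] at hmem
  have h1 : (wa k : ℤ) ∈ {x | ∃ m > 0, beattySeq phi m = x} :=
    ⟨(k : ℤ), by exact_mod_cast hk, (wa_eq_beatty k).symm⟩
  have h2 : (wa k : ℤ) ∈ {x | ∃ m > 0, beattySeq (phi ^ 2) m = x} :=
    ⟨(l : ℤ), by exact_mod_cast hl, by rw [← wb_eq_beatty, h]⟩
  rcases hmem with ⟨_, hb⟩ | ⟨_, ha⟩
  · exact hb h2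
  · exact ha h1

lemma wythoff_cover {m : ℕ} (hm : 0 < m) :
    (∃ k, 0 < k ∧ wa k = m) ∨ (∃ k, 0 < k ∧ wb k = m) := by
  have hmem : ((m : ℤ)) ∈
      {x | ∃ k > 0, beattySeq phi k = x} ∆ {x | ∃ k > 0, beattySeq (phi ^ 2) k = x} := by
    rw [hsymmdiff]
    simp only [Set.mem_setOf_eq]
    exact_mod_cast hm
  rw [Set.mem_symmDiff] at hmem
  rcases hmem with ⟨⟨k, hk, hbk⟩, _⟩ | ⟨⟨k, hk, hbk⟩, _⟩
  · left
    refine ⟨k.toNat, by omega, ?_⟩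
    have : ((k.toNat : ℕ) : ℤ) = k := by omega
    have := (wa_eq_beatty k.toNat).trans (by rw [this, hbk])
    exact_mod_cast this
  · right
    refine ⟨k.toNat, by omega, ?_⟩
    have : ((k.toNat : ℕ) : ℤ) = k := by omega
    have := (wb_eq_beatty k.toNat).trans (by rw [this, hbk])
    exact_mod_cast this

lemma fij_strictMono (i : ℕ) (j : ℤ) : StrictMono (fij i j) := by
  intro n m hnm
  have hwa : (wa n : ℤ) < (wa m : ℤ) := by exact_mod_cast wa_strictMono hnm
  have hF1 : (1 : ℤ) ≤ (Nat.fib (i + 1) : ℤ) := by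
    exact_mod_cast Nat.fib_pos.mpr (by omega)
  have hF0 : (0 : ℤ) ≤ (Nat.fib i : ℤ) := by positivity
  have hnm' : (n : ℤ) < (m : ℤ) := by exact_mod_cast hnm
  unfold fij
  nlinarith

lemma fij_inj (i : ℕ) (j : ℤ) : Function.Injective (fij i j) :=
  (fij_strictMono i j).injective

theorem stmt_1 (i : ℕ) (j : ℤ) :
    (∀ n : ℕ, 0 < n → fij (i + 1) ((Nat.fib (i + 1) : ℤ) + j) n = fij i j (wa n)) ∧
    (∀ n : ℕ, 0 < n → fij (i + 2) j n = fij i j (wb n)) ∧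
    R i j = R (i + 1) ((Nat.fib (i + 1) : ℤ) + j) ∪ R (i + 2) j ∧
    R (i + 1) ((Nat.fib (i + 1) : ℤ) + j) ∩ R (i + 2) j = ∅ := by
  have part1 : ∀ n : ℕ, 0 < n →
      fij (i + 1) ((Nat.fib (i + 1) : ℤ) + j) n = fij i j (wa n) := by
    intro n hn
    unfold fij
    rw [waa hn, show i + 1 + 1 = i + 2 from rfl, Nat.fib_add_two]
    push_cast
    ring
  have part2 : ∀ n : ℕ, 0 < n → fij (i + 2) j n = fij i j (wb n) := by
    intro n hn
    unfold fij
    rw [wab hn, wb_eq n,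
      show i + 2 + 1 = (i + 1) + 2 from rfl, Nat.fib_add_two, Nat.fib_add_two]
    push_cast
    ring
  refine ⟨part1, part2, ?_, ?_⟩
  · ext m
    constructor
    · rintro ⟨n, hn, he⟩
      rcases wythoff_cover hn with ⟨k, hk, hwk⟩ | ⟨k, hk, hwk⟩
      · exact Or.inl ⟨k, hk, by rw [part1 k hk, hwk, he]⟩
      · exact Or.inr ⟨k, hk, by rw [part2 k hk, hwk, he]⟩
    · rintro (⟨k, hk, he⟩ | ⟨k, hk, he⟩)
      · exact ⟨wa k, wa_pos hk, by rw [← part1 k hk, he]⟩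
      · exact ⟨wb k, wb_pos hk, by rw [← part2 k hk, he]⟩
  · ext m
    simp only [Set.mem_inter_iff, Set.mem_empty_iff_false, iff_false, not_and]
    rintro ⟨k, hk, h1⟩ ⟨l, hl, h2⟩
    rw [part1 k hk] at h1
    rw [part2 l hl] at h2
    have : wa k = wb l := fij_inj i j (h1.trans h2.symm)
    exact wythoff_disjoint hk hl this
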